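/- For σ ∈ Δ with σ nonempty, σ equals the intersection of all facets of Δ containing σ if and only if Lk_σ(Δ) is not a cone (i.e., there is no vertex contained in every facet of Lk_σ(Δ)). -/

import Mathlib

/-- A simplicial complex on `[n]`: a collection of subsets of `[n]` closed under inclusion. -/
def IsSimplicialComplex {n : ℕ} (Δ : Set (Finset (Fin n))) : Prop :=
  ∀ σ ∈ Δ, ∀ τ ⊆ σ, τ ∈ Δ

/-- The link of `σ` in `Δ`. -/
def link {n : ℕ} (Δ : Set (Finset (Fin n))) (σ : Finset (Fin n)) : Set (Finset (Fin n)) :=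
  {ω | ω ∈ Δ ∧ Disjoint σ ω ∧ σ ∪ ω ∈ Δ}

/-- `ρ` is a facet of `Δ`: a face maximal under inclusion. -/
def IsFacet {n : ℕ} (Δ : Set (Finset (Fin n))) (ρ : Finset (Fin n)) : Prop :=
  ρ ∈ Δ ∧ ∀ τ ∈ Δ, ρ ⊆ τ → τ = ρ

/-- `f_σ`: the intersection of all facets of `Δ` containing `σ`, as a set of vertices. -/
def facetInt {n : ℕ} (Δ : Set (Finset (Fin n))) (σ : Finset (Fin n)) : Set (Fin n) :=
  {i | ∀ ρ, IsFacet Δ ρ → σ ⊆ ρ → i ∈ ρ}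

/-- Every face of a (finite) complex is contained in a facet. -/
lemma exists_facet_containing {n : ℕ} (Γ : Set (Finset (Fin n))) {τ : Finset (Fin n)}
    (hτ : τ ∈ Γ) : ∃ ρ, IsFacet Γ ρ ∧ τ ⊆ ρ := by
  have hf : {ρ ∈ Γ | τ ⊆ ρ}.Finite := Set.toFinite _
  obtain ⟨ρ, hρ, hmax⟩ := Set.Finite.exists_maximalFor Finset.card {ρ ∈ Γ | τ ⊆ ρ} (Set.toFinite _) ⟨τ, hτ, subset_rfl⟩
  refine ⟨ρ, ⟨hρ.1, ?_⟩, hρ.2⟩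
  intro τ' hτ' hsub
  exact (Finset.eq_of_subset_of_card_le hsub
    (hmax (j := τ') ⟨hτ', hρ.2.trans hsub⟩ (Finset.card_le_card hsub))).symm

/-- If `ρ` is a facet of `Δ` containing `σ`, then `ρ \ σ` is a facet of the link. -/
lemma facet_sdiff {n : ℕ} {Δ : Set (Finset (Fin n))} (hΔ : IsSimplicialComplex Δ)
    {σ ρ : Finset (Fin n)} (hρ : IsFacet Δ ρ) (hsub : σ ⊆ ρ) :
    IsFacet (link Δ σ) (ρ \ σ) := by
  have hunion : σ ∪ (ρ \ σ) = ρ := Finset.union_sdiff_of_subset hsub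
  refine ⟨⟨hΔ ρ hρ.1 _ Finset.sdiff_subset, Finset.disjoint_sdiff, by rw [hunion]; exact hρ.1⟩, ?_⟩
  rintro τ ⟨hτΔ, hdisj, hunΔ⟩ hst
  have hρsub : ρ ⊆ σ ∪ τ := by
    rw [← hunion]; exact Finset.union_subset_union_right hst
  have heq : σ ∪ τ = ρ := hρ.2 _ hunΔ hρsub
  apply Finset.Subset.antisymm _ hst
  intro i hi
  have : i ∈ σ ∪ τ := Finset.mem_union_right _ hi
  rw [heq] at this
  exact Finset.mem_sdiff.2 ⟨this, Finset.disjoint_right.1 hdisj hi⟩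

/-- If `τ` is a facet of the link, then `σ ∪ τ` is a facet of `Δ`. -/
lemma facet_union {n : ℕ} {Δ : Set (Finset (Fin n))} (hΔ : IsSimplicialComplex Δ)
    {σ τ : Finset (Fin n)} (hτ : IsFacet (link Δ σ) τ) :
    IsFacet Δ (σ ∪ τ) := by
  obtain ⟨⟨hτΔ, hdisj, hunΔ⟩, hmax⟩ := hτ
  refine ⟨hunΔ, ?_⟩
  intro ρ' hρ' hsub
  have hσρ' : σ ⊆ ρ' := (Finset.subset_union_left).trans hsub
  have hmem : ρ' \ σ ∈ link Δ σ := by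
    refine ⟨hΔ ρ' hρ' _ Finset.sdiff_subset, Finset.disjoint_sdiff, ?_⟩
    rw [Finset.union_sdiff_of_subset hσρ']; exact hρ'
  have hτsub : τ ⊆ ρ' \ σ := by
    intro i hi
    exact Finset.mem_sdiff.2 ⟨hsub (Finset.mem_union_right _ hi),
      Finset.disjoint_right.1 hdisj hi⟩
  have : ρ' \ σ = τ := hmax _ hmem hτsub
  rw [← Finset.union_sdiff_of_subset hσρ', this]

theorem stmt2 {n : ℕ} (Δ : Set (Finset (Fin n))) (hΔ : IsSimplicialComplex Δ)
    (σ : Finset (Fin n)) (hσ : σ ∈ Δ) (hne : σ.Nonempty) :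
    (↑σ = facetInt Δ σ) ↔ ¬ ∃ v : Fin n, ∀ ρ, IsFacet (link Δ σ) ρ → v ∈ ρ := by
  constructor
  · rintro heq ⟨v, hv⟩
    -- the link is nonempty (it contains ∅), so it has a facet
    have hemp : (∅ : Finset (Fin n)) ∈ link Δ σ :=
      ⟨hΔ σ hσ ∅ (Finset.empty_subset _), Finset.disjoint_empty_right _, by simpa using hσ⟩
    obtain ⟨ρ₀, hρ₀, -⟩ := exists_facet_containing (link Δ σ) hemp
    have hvnotσ : v ∉ σ := fun h => Finset.disjoint_left.1 hρ₀.1.2.1 h (hv ρ₀ hρ₀)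
    -- v belongs to every facet of Δ containing σ
    have hvint : v ∈ facetInt Δ σ := by
      intro ρ hρ hsub
      have := hv _ (facet_sdiff hΔ hρ hsub)
      exact (Finset.mem_sdiff.1 this).1
    rw [← heq] at hvint
    exact hvnotσ hvint
  · intro hnocone
    apply Set.Subset.antisymm
    · intro i hi ρ hρ hsub
      exact hsub hi
    · intro i hi
      by_contra hiσ
      apply hnocone
      refine ⟨i, fun τ hτ => ?_⟩
      have hfac := facet_union hΔ hτ
      have : i ∈ σ ∪ τ := hi _ hfac Finset.subset_union_left
      rcases Finset.mem_union.1 this with h | h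
      · exact absurd h hiσ
      · exact h
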